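/- Let R be a domain, m, n ∈ R, and let A be the rank-3 R-algebra with basis 1, i, j and multiplication i² = ni, ij = 0, ji = −mn + mi + nj, j² = mj. Then the R-linear map fixing R and sending i ↦ n − i, j ↦ m − j is a standard involution on A; in particular (a + bi + cj)(a + bi + cj)‾ = a(a + bn + cm) + bcmn ∈ R. -/

import Mathlib

/-- For the rank-3 R-algebra with basis 1, i, j and multiplication i² = ni,
ij = 0, ji = -mn + mi + nj, j² = mj, the R-linear map fixing R and sending
i ↦ n - i, j ↦ m - j is a standard involution; in particular
(a + bi + cj)(a + bi + cj)‾ = a(a + bn + cm) + bcmn ∈ R. -/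
theorem case_E_standard_involution
    (R A : Type*) [CommRing R] [IsDomain R] [Ring A] [Algebra R A]
    (m n : R) (bas : Module.Basis (Fin 3) R A) (h1 : bas 0 = 1)
    (i j : A) (hi : i = bas 1) (hj : j = bas 2)
    (hii : i * i = n • i) (hij : i * j = 0)
    (hji : j * i = algebraMap R A (-(m * n)) + m • i + n • j)
    (hjj : j * j = m • j)
    (σ : A →ₗ[R] A)
    (hσR : ∀ r : R, σ (algebraMap R A r) = algebraMap R A r)
    (hσi : σ i = algebraMap R A n - i) (hσj : σ j = algebraMap R A m - j) :
    (∀ x, σ (σ x) = x) ∧ σ 1 = 1 ∧ (∀ x y, σ (x * y) = σ y * σ x) ∧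
      (∀ x : A, ∃ r : R, x * σ x = algebraMap R A r) ∧
      (∀ a b c : R,
        (algebraMap R A a + b • i + c • j) * σ (algebraMap R A a + b • i + c • j) =
          algebraMap R A (a * (a + b * n + c * m) + b * c * m * n)) := by
  have decomp : ∀ x : A, ∃ a b c : R, x = algebraMap R A a + b • i + c • j := by
    intro x
    refine ⟨bas.repr x 0, bas.repr x 1, bas.repr x 2, ?_⟩
    have hs := bas.sum_repr x
    rw [Fin.sum_univ_three, h1, ← hi, ← hj] at hs
    rw [Algebra.algebraMap_eq_smul_one]
    exact hs.symm
  have hσ : ∀ a b c : R, σ (algebraMap R A a + b • i + c • j)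
      = algebraMap R A (a + b * n + c * m) + (-b) • i + (-c) • j := by
    intro a b c
    simp only [map_add, map_smul, hσi, hσj, hσR]
    simp only [Algebra.algebraMap_eq_smul_one, smul_sub, neg_smul]
    module
  have key : ∀ a b c a' b' c' : R,
      (algebraMap R A a + b • i + c • j) * (algebraMap R A a' + b' • i + c' • j)
      = algebraMap R A (a * a' - c * b' * (m * n))
        + (a * b' + a' * b + b * b' * n + c * b' * m) • i
        + (a * c' + a' * c + c * b' * n + c * c' * m) • j := by
    intro a b c a' b' c'
    have hji' : j * i = (-(m * n)) • (1 : A) + m • i + n • j := by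
      rw [hji, Algebra.algebraMap_eq_smul_one]
    simp only [add_mul, mul_add, Algebra.algebraMap_eq_smul_one, smul_mul_assoc,
      mul_smul_comm, one_mul, mul_one, hii, hij, hji', hjj, smul_zero, smul_add,
      smul_smul]
    module
  refine ⟨?_, ?_, ?_, ?_, ?_⟩
  · intro x
    obtain ⟨a, b, c, rfl⟩ := decomp x
    rw [hσ, hσ]
    simp only [Algebra.algebraMap_eq_smul_one]
    module
  · have := hσR 1
    rwa [map_one] at this
  · intro x y
    obtain ⟨a, b, c, rfl⟩ := decomp x
    obtain ⟨a', b', c', rfl⟩ := decomp y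
    rw [key, hσ, hσ, hσ, key]
    simp only [Algebra.algebraMap_eq_smul_one]
    module
  · intro x
    obtain ⟨a, b, c, rfl⟩ := decomp x
    refine ⟨a * (a + b * n + c * m) + b * c * m * n, ?_⟩
    rw [hσ, key]
    simp only [Algebra.algebraMap_eq_smul_one]
    module
  · intro a b c
    rw [hσ, key]
    simp only [Algebra.algebraMap_eq_smul_one]
    module
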